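/- Let n, m be positive integers, F an n×n real matrix, G an n×m real matrix, Q a symmetric positive-definite n×n real matrix, R a symmetric positive-definite m×m real matrix, and P a symmetric positive-semidefinite n×n real matrix satisfying the Algebraic Riccati Equation FᵀP + PF + Q = PGR⁻¹GᵀP. Set K = −R⁻¹GᵀP. Then every complex eigenvalue μ of the closed-loop matrix F + GK (viewed as a complex matrix) satisfies Re μ < 0; i.e., F + GK is Hurwitz. -/

import Mathlib

open Matrix
open scoped ComplexOrder

private lemma map_psd_ofReal {n : ℕ} {M : Matrix (Fin n) (Fin n) ℝ} (h : M.PosSemidef) :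
    (M.map Complex.ofReal).PosSemidef := by
  obtain ⟨B, rfl⟩ : ∃ B : Matrix (Fin n) (Fin n) ℝ, M = Bᴴ * B := by
    open scoped MatrixOrder in exact CStarAlgebra.nonneg_iff_eq_star_mul_self.mp h.nonneg
  have h2 : (Bᴴ * B).map Complex.ofReal
      = (B.map Complex.ofReal)ᴴ * (B.map Complex.ofReal) := by
    ext i j
    simp [Matrix.mul_apply, conjTranspose_apply, Complex.conj_ofReal]
  rw [h2]
  exact posSemidef_conjTranspose_mul_self _

theorem closed_loop_hurwitz
    (n m : ℕ) (hn : 0 < n) (hm : 0 < m)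
    (F Q P : Matrix (Fin n) (Fin n) ℝ)
    (G : Matrix (Fin n) (Fin m) ℝ)
    (R : Matrix (Fin m) (Fin m) ℝ)
    (hQ : Q.PosDef) (hR : R.PosDef) (hP : P.PosSemidef)
    (hARE : Fᵀ * P + P * F + Q = P * G * R⁻¹ * Gᵀ * P)
    (K : Matrix (Fin m) (Fin n) ℝ) (hK : K = -(R⁻¹ * Gᵀ * P))
    (μ : ℂ)
    (hμ : μ ∈ spectrum ℂ ((F + G * K).map (Complex.ofReal))) :
    μ.re < 0 := by
  classical
  set A : Matrix (Fin n) (Fin n) ℝ := F + G * K with hA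
  -- symmetry facts
  have hPt : Pᵀ = P := hP.isHermitian
  have hRt : (R⁻¹)ᵀ = R⁻¹ := by
    rw [Matrix.transpose_nonsing_inv, show Rᵀ = R from hR.isHermitian]
  have hGH : Gᴴ = Gᵀ := by ext i j; simp [conjTranspose_apply]
  have hPH : Pᴴ = P := hP.isHermitian
  -- Lyapunov identity
  have hIdent : Aᵀ * P + P * A = -(Q + P * G * R⁻¹ * Gᵀ * P) := by
    rw [hA]
    subst hK
    have h1 : Fᵀ * P = P * G * R⁻¹ * Gᵀ * P - Q - P * F := by
      rw [← hARE]; noncomm_ring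
    simp only [transpose_add, transpose_mul, transpose_neg, hPt, hRt, transpose_transpose]
    rw [add_mul, h1]
    simp only [Matrix.mul_add, Matrix.add_mul, Matrix.mul_neg, Matrix.neg_mul,
      ← Matrix.mul_assoc, neg_add_rev]
    abel
  -- positive semidefiniteness facts
  have hS : (G * R⁻¹ * Gᵀ).PosSemidef := by
    have := hR.inv.posSemidef.mul_mul_conjTranspose_same G
    rwa [hGH] at this
  have hPSP : (P * G * R⁻¹ * Gᵀ * P).PosSemidef := by
    have := hS.conjTranspose_mul_mul_same P
    rw [hPH] at this
    rwa [show P * (G * R⁻¹ * Gᵀ) * P = P * G * R⁻¹ * Gᵀ * P by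
      simp only [Matrix.mul_assoc]] at this
  -- eigenvector
  rw [← AlgEquiv.spectrum_eq (Matrix.toLinAlgEquiv' (R := ℂ) (n := Fin n)),
    ← Module.End.hasEigenvalue_iff_mem_spectrum] at hμ
  obtain ⟨v, hv⟩ := hμ.exists_hasEigenvector
  have hvne : v ≠ 0 := hv.2
  have hvEig : (A.map Complex.ofReal) *ᵥ v = μ • v := by
    have h3 := hv.apply_eq_smul
    rwa [Matrix.toLinAlgEquiv'_apply] at h3
  -- complexified matrices
  set Ac := A.map Complex.ofReal with hAc
  set Pc := P.map Complex.ofReal with hPc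
  set Qc := Q.map Complex.ofReal with hQc
  set Sc := (P * G * R⁻¹ * Gᵀ * P).map Complex.ofReal with hSc
  have hmapAP : ((Aᵀ * P).map Complex.ofReal) = Acᴴ * Pc := by
    ext i j
    simp [Matrix.mul_apply, conjTranspose_apply, transpose_apply, Complex.conj_ofReal, hAc, hPc]
  have hmapPA : ((P * A).map Complex.ofReal) = Pc * Ac := by
    ext i j
    simp [Matrix.mul_apply, hAc, hPc]
  have hmapSum : ((Aᵀ * P + P * A).map Complex.ofReal) = -(Qc + Sc) := by
    rw [hIdent]
    ext i j
    simp [hQc, hSc]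
  -- quadratic forms
  set p : ℂ := star v ⬝ᵥ Pc *ᵥ v with hp
  set a : ℂ := star v ⬝ᵥ Qc *ᵥ v with ha
  set b : ℂ := star v ⬝ᵥ Sc *ᵥ v with hb
  have key : ((starRingEnd ℂ) μ + μ) * p = -(a + b) := by
    have e1 : star v ⬝ᵥ (Acᴴ * Pc) *ᵥ v = (starRingEnd ℂ) μ * p := by
      rw [← Matrix.mulVec_mulVec, Matrix.dotProduct_mulVec, ← Matrix.star_mulVec, hvEig]
      rw [star_smul, smul_dotProduct]
      simp [hp, Matrix.dotProduct_mulVec]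
    have e2 : star v ⬝ᵥ (Pc * Ac) *ᵥ v = μ * p := by
      rw [← Matrix.mulVec_mulVec, hvEig, Matrix.mulVec_smul, dotProduct_smul]
      simp [hp]
    have e3 : star v ⬝ᵥ ((Aᵀ * P + P * A).map Complex.ofReal) *ᵥ v = -(a + b) := by
      rw [hmapSum]
      simp [ha, hb, Matrix.add_mulVec, Matrix.neg_mulVec, dotProduct_add]
    have e4 : ((Aᵀ * P + P * A).map Complex.ofReal) = Acᴴ * Pc + Pc * Ac := by
      rw [show ((Aᵀ * P + P * A).map Complex.ofReal)
          = (Aᵀ * P).map Complex.ofReal + (P * A).map Complex.ofReal by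
        ext i j; simp, hmapAP, hmapPA]
    rw [e4] at e3
    rw [Matrix.add_mulVec, dotProduct_add, e1, e2] at e3
    rw [← e3]; ring
  -- positivity facts (in the complex order)
  have hPcpsd := map_psd_ofReal hP
  have hQcpsd := map_psd_ofReal hQ.posSemidef
  have hScpsd := map_psd_ofReal hPSP
  have hpnn : 0 ≤ p := hPcpsd.dotProduct_mulVec_nonneg v
  have hann : 0 ≤ a := hQcpsd.dotProduct_mulVec_nonneg v
  have hbnn : 0 ≤ b := hScpsd.dotProduct_mulVec_nonneg v
  -- a ≠ 0
  have hane : a ≠ 0 := by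
    intro h0
    have hQv : Qc *ᵥ v = 0 := (hQcpsd.dotProduct_mulVec_zero_iff v).mp (by rw [← ha]; exact h0)
    have hdet : IsUnit Qc.det := by
      have hdq : Qc.det = Complex.ofReal Q.det :=
        (RingHom.map_det Complex.ofRealHom Q).symm
      rw [hdq]
      simp only [isUnit_iff_ne_zero, ne_eq, Complex.ofReal_eq_zero]
      exact ne_of_gt hQ.det_pos
    have hinj : Function.Injective Qc.mulVec :=
      mulVec_injective_iff_isUnit.mpr ((Matrix.isUnit_iff_isUnit_det Qc).mpr hdet)
    exact hvne (hinj (by rw [hQv, Matrix.mulVec_zero]))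
  -- convert to real inequalities
  rw [Complex.le_def] at hpnn hann hbnn
  simp only [Complex.zero_re, Complex.zero_im] at hpnn hann hbnn
  have hare : 0 < a.re := by
    rcases lt_or_eq_of_le hpnn.1 with h | h
    · exact lt_of_le_of_ne hann.1 (by
        intro h0
        exact hane (Complex.ext (by simp [← h0]) (by simp [← hann.2])))
    · exact lt_of_le_of_ne hann.1 (by
        intro h0
        exact hane (Complex.ext (by simp [← h0]) (by simp [← hann.2])))
  have hkeyre : 2 * μ.re * p.re = -(a.re + b.re) := by
    have hre := congrArg Complex.re key
    simp only [Complex.mul_re, Complex.add_re, Complex.add_im, Complex.conj_re,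
      Complex.conj_im, Complex.neg_re] at hre
    rw [← hpnn.2] at hre
    linear_combination hre
  by_contra hcon
  push_neg at hcon
  nlinarith [mul_nonneg hcon hpnn.1, hare, hbnn.1]
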